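/- For the elementary Blaschke factor b(z,w) = (|w|/w)·(w−z)/(1−w̄z) (with b(z,0)=z), and for any z, w in the open unit disk, the inequality |1 − b(z,w)| ≤ ((1+|z|)/|1−w̄z|)·(1−|w|) holds. -/

import Mathlib

/-- The elementary Blaschke factor `b(z,w)`. -/
noncomputable def blaschke (z w : ℂ) : ℂ :=
  if w = 0 then z else (((‖w‖ : ℝ) : ℂ) / w) * ((w - z) / (1 - (starRingEnd ℂ) w * z))

/-- For `z, w` in the open unit disk,
`|1 − b(z,w)| ≤ ((1+|z|)/|1−w̄z|)·(1−|w|)`. -/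
theorem abs_one_sub_blaschke_le (z w : ℂ)
    (hz : ‖z‖ < 1) (hw : ‖w‖ < 1) :
    ‖1 - blaschke z w‖ ≤
      (1 + ‖z‖) / ‖1 - (starRingEnd ℂ) w * z‖ * (1 - ‖w‖) := by
  rcases eq_or_ne w 0 with h | h
  · subst h
    simp only [blaschke, if_pos rfl, map_zero, sub_zero, mul_zero, zero_mul, map_one, div_one,
      mul_one, norm_one, norm_zero]
    simpa using norm_sub_le (1 : ℂ) z
  · have hlt : ‖(starRingEnd ℂ) w * z‖ < 1 := by
      rw [norm_mul, Complex.norm_conj]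
      nlinarith [norm_nonneg w, norm_nonneg z]
    have hd : (1 - (starRingEnd ℂ) w * z) ≠ 0 := by
      intro hc
      have : (1 : ℂ) = (starRingEnd ℂ) w * z := by linear_combination hc
      rw [← this, norm_one] at hlt
      exact lt_irrefl 1 hlt
    have hw2 : ((‖w‖ : ℂ)) * (‖w‖ : ℂ) = w * (starRingEnd ℂ) w := by
      rw [Complex.mul_conj]
      norm_cast
      rw [← Complex.sq_norm]
      ring
    have key : 1 - blaschke z w =
        (1 - (‖w‖ : ℂ)) * (1 + (‖w‖ : ℂ) / w * z) /
          (1 - (starRingEnd ℂ) w * z) := by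
      rw [blaschke, if_neg h]
      have hd' : (1 - z * (starRingEnd ℂ) w) ≠ 0 := by rwa [mul_comm z]
      field_simp
      linear_combination z * hw2
    rw [key, norm_div, norm_mul]
    have h1 : ‖1 - (‖w‖ : ℂ)‖ = 1 - ‖w‖ := by
      rw [← Complex.ofReal_one, ← Complex.ofReal_sub, Complex.norm_real, Real.norm_eq_abs]
      exact abs_of_nonneg (by linarith)
    have h2 : ‖1 + (‖w‖ : ℂ) / w * z‖ ≤ 1 + ‖z‖ := by
      calc ‖1 + (‖w‖ : ℂ) / w * z‖
          ≤ ‖(1 : ℂ)‖ + ‖(‖w‖ : ℂ) / w * z‖ :=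
            norm_add_le _ _
        _ = 1 + ‖z‖ := by
            rw [norm_one, norm_mul, norm_div, Complex.norm_real, Real.norm_eq_abs, abs_of_nonneg (norm_nonneg w),
              div_self (norm_ne_zero_iff.mpr h), one_mul]
    rw [h1]
    have hD : 0 < ‖1 - (starRingEnd ℂ) w * z‖ := norm_pos_iff.mpr hd
    calc (1 - ‖w‖) * ‖1 + (‖w‖ : ℂ) / w * z‖ /
          ‖1 - (starRingEnd ℂ) w * z‖
        ≤ (1 - ‖w‖) * (1 + ‖z‖) /
          ‖1 - (starRingEnd ℂ) w * z‖ := by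
          gcongr
      _ = (1 + ‖z‖) / ‖1 - (starRingEnd ℂ) w * z‖ * (1 - ‖w‖) := by
          ring
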